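/- Let F be a field and let S = {(X, Y) ∈ M₂(F) × M₂(F) : det X = 0, det Y = 0, det(X + Y) = 1}. Then (E₁₁, E₂₂) ∈ S and H₁(F) acts transitively on S; that is, for every (X, Y) ∈ S there exists (g₁, g₂) ∈ GL₂(F) × GL₂(F) with det g₁ = det g₂ such that X = g₁ E₁₁ g₂⁻¹ and Y = g₁ E₂₂ g₂⁻¹. -/
import Mathlib
set_option maxHeartbeats 1000000


open Matrix

lemma key_conj (F : Type*) [Field F] (P : Matrix (Fin 2) (Fin 2) F)
    (h1 : P.det = 0) (h2 : (1 - P).det = 0) :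
    ∃ h : Matrix (Fin 2) (Fin 2) F, IsUnit h.det ∧
      P * h = h * !![1,0;0,0] ∧ (1 - P) * h = h * !![0,0;0,1] := by
  set a := P 0 0 with ha
  set b := P 0 1 with hb
  set c := P 1 0 with hc
  set d := P 1 1 with hd
  have hP : P = !![a, b; c, d] := by
    ext i j; fin_cases i <;> fin_cases j <;> simp [ha, hb, hc, hd]
  rw [hP] at h1 h2 ⊢
  rw [Matrix.det_fin_two_of] at h1
  have h1P : (1 - !![a,b;c,d] : Matrix (Fin 2) (Fin 2) F) = !![1-a, -b; -c, 1-d] := by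
    ext i j; fin_cases i <;> fin_cases j <;>
      simp [Matrix.sub_apply, Matrix.one_apply]
  rw [h1P] at h2 ⊢
  rw [Matrix.det_fin_two_of] at h2
  have htr : a + d = 1 := by linear_combination h1 - h2
  by_cases hane : a ≠ 0
  · refine ⟨!![a, b; c, -a], ?_, ?_, ?_⟩
    · rw [Matrix.det_fin_two_of]
      have : a * -a - b * c = -a := by linear_combination h1 - a * htr
      rw [this]
      exact (isUnit_iff_ne_zero.mpr hane).neg
    · ext i j; fin_cases i <;> fin_cases j <;>
        simp [Matrix.mul_apply, Fin.sum_univ_two] <;> (first | ring1 | linear_combination 2*h1 | linear_combination h1 | linear_combination -h1 | linear_combination -2*h1 | linear_combination a*htr - 2*h1 | linear_combination -a*htr - 2*h1 | linear_combination a*htr - h1 | linear_combination -a*htr - h1 | linear_combination a*htr | linear_combination -a*htr | linear_combination a*htr + h1 | linear_combination -a*htr + h1 | linear_combination a*htr + 2*h1 | linear_combination -a*htr + 2*h1 | linear_combination b*htr - 2*h1 | linear_combination -b*htr - 2*h1 | linear_combination b*htr - h1 | linear_combination -b*htr - h1 | linear_combination b*htr | linear_combination -b*htr | linear_combination b*htr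 + h1 | linear_combination -b*htr + h1 | linear_combination b*htr + 2*h1 | linear_combination -b*htr + 2*h1 | linear_combination c*htr - 2*h1 | linear_combination -c*htr - 2*h1 | linear_combination c*htr - h1 | linear_combination -c*htr - h1 | linear_combination c*htr | linear_combination -c*htr | linear_combination c*htr + h1 | linear_combination -c*htr + h1 | linear_combination c*htr + 2*h1 | linear_combination -c*htr + 2*h1 | linear_combination d*htr - 2*h1 | linear_combination -d*htr - 2*h1 | linear_combination d*htr - h1 | linear_combination -d*htr - h1 | linear_combination d*htr | linear_combination -d*htr | linear_combination d*htr + h1 | linear_combination -d*htr + h1 | linear_combination d*htr + 2*h1 | linear_combination -d*htr + 2*h1)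
    · ext i j; fin_cases i <;> fin_cases j <;>
        simp [Matrix.mul_apply, Fin.sum_univ_two] <;> (first | ring1 | linear_combination 2*h1 | linear_combination h1 | linear_combination -h1 | linear_combination -2*h1 | linear_combination a*htr - 2*h1 | linear_combination -a*htr - 2*h1 | linear_combination a*htr - h1 | linear_combination -a*htr - h1 | linear_combination a*htr | linear_combination -a*htr | linear_combination a*htr + h1 | linear_combination -a*htr + h1 | linear_combination a*htr + 2*h1 | linear_combination -a*htr + 2*h1 | linear_combination b*htr - 2*h1 | linear_combination -b*htr - 2*h1 | linear_combination b*htr - h1 | linear_combination -b*htr - h1 | linear_combination b*htr | linear_combination -b*htr | linear_combination b*htr + h1 | linear_combination -b*htr + h1 | linear_combination b*htr + 2*h1 | linear_combination -b*htr + 2*h1 | linear_combination c*htr - 2*h1 | linear_combination -c*htr - 2*h1 | linear_combination c*htr - h1 | linear_combination -c*htr - h1 | linear_combination c*htr | linear_combination -c*htr | linear_combination c*htr + h1 | linear_combination -c*htr + h1 | linear_combination c*htr + 2*h1 | linear_combination -c*htr + 2*h1 | linear_combination d*htr - 2*h1 | linear_combination -d*htr - 2*h1 | linear_combination d*htr -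 h1 | linear_combination -d*htr - h1 | linear_combination d*htr | linear_combination -d*htr | linear_combination d*htr + h1 | linear_combination -d*htr + h1 | linear_combination d*htr + 2*h1 | linear_combination -d*htr + 2*h1)
  · push_neg at hane
    have hdne : d ≠ 0 := by rw [hane, zero_add] at htr; rw [htr]; exact one_ne_zero
    refine ⟨!![b, d; d, -c], ?_, ?_, ?_⟩
    · rw [Matrix.det_fin_two_of]
      have : b * -c - d * d = -d := by linear_combination h1 - d * htr
      rw [this]
      exact (isUnit_iff_ne_zero.mpr hdne).neg
    · ext i j; fin_cases i <;> fin_cases j <;>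
        simp [Matrix.mul_apply, Fin.sum_univ_two] <;> (first | ring1 | linear_combination 2*h1 | linear_combination h1 | linear_combination -h1 | linear_combination -2*h1 | linear_combination a*htr - 2*h1 | linear_combination -a*htr - 2*h1 | linear_combination a*htr - h1 | linear_combination -a*htr - h1 | linear_combination a*htr | linear_combination -a*htr | linear_combination a*htr + h1 | linear_combination -a*htr + h1 | linear_combination a*htr + 2*h1 | linear_combination -a*htr + 2*h1 | linear_combination b*htr - 2*h1 | linear_combination -b*htr - 2*h1 | linear_combination b*htr - h1 | linear_combination -b*htr - h1 | linear_combination b*htr | linear_combination -b*htr | linear_combination b*htr + h1 | linear_combination -b*htr + h1 | linear_combination b*htr + 2*h1 | linear_combination -b*htr + 2*h1 | linear_combination c*htr - 2*h1 | linear_combination -c*htr - 2*h1 | linear_combination c*htr - h1 | linear_combination -c*htr - h1 | linear_combination c*htr | linear_combination -c*htr | linear_combination c*htr + h1 | linear_combination -c*htr + h1 | linear_combination c*htr + 2*h1 | linear_combination -c*htr + 2*h1 | linear_combination d*htr - 2*h1 | linear_combination -d*htr - 2*h1 | linear_combination d*htr - h1 | linear_combination -d*htr - h1 | linear_combination d*htr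 | linear_combination -d*htr | linear_combination d*htr + h1 | linear_combination -d*htr + h1 | linear_combination d*htr + 2*h1 | linear_combination -d*htr + 2*h1)
    · ext i j; fin_cases i <;> fin_cases j <;>
        simp [Matrix.mul_apply, Fin.sum_univ_two] <;> (first | ring1 | linear_combination 2*h1 | linear_combination h1 | linear_combination -h1 | linear_combination -2*h1 | linear_combination a*htr - 2*h1 | linear_combination -a*htr - 2*h1 | linear_combination a*htr - h1 | linear_combination -a*htr - h1 | linear_combination a*htr | linear_combination -a*htr | linear_combination a*htr + h1 | linear_combination -a*htr + h1 | linear_combination a*htr + 2*h1 | linear_combination -a*htr + 2*h1 | linear_combination b*htr - 2*h1 | linear_combination -b*htr - 2*h1 | linear_combination b*htr - h1 | linear_combination -b*htr - h1 | linear_combination b*htr | linear_combination -b*htr | linear_combination b*htr + h1 | linear_combination -b*htr + h1 | linear_combination b*htr + 2*h1 | linear_combination -b*htr + 2*h1 | linear_combination c*htr - 2*h1 | linear_combination -c*htr - 2*h1 | linear_combination c*htr - h1 | linear_combination -c*htr - h1 | linear_combination c*htr | linear_combination -c*htr | linear_combination c*htr + h1 | linear_combination -c*htr + h1 | linear_combination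 c*htr + 2*h1 | linear_combination -c*htr + 2*h1 | linear_combination d*htr - 2*h1 | linear_combination -d*htr - 2*h1 | linear_combination d*htr - h1 | linear_combination -d*htr - h1 | linear_combination d*htr | linear_combination -d*htr | linear_combination d*htr + h1 | linear_combination -d*htr + h1 | linear_combination d*htr + 2*h1 | linear_combination -d*htr + 2*h1)

theorem stmt_0 (F : Type*) [Field F] :
    ((!![1,0;0,0] : Matrix (Fin 2) (Fin 2) F).det = 0 ∧
      (!![0,0;0,1] : Matrix (Fin 2) (Fin 2) F).det = 0 ∧
      ((!![1,0;0,0] + !![0,0;0,1] : Matrix (Fin 2) (Fin 2) F)).det = 1) ∧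
    ∀ X Y : Matrix (Fin 2) (Fin 2) F,
      X.det = 0 → Y.det = 0 → (X + Y).det = 1 →
      ∃ g₁ g₂ : Matrix (Fin 2) (Fin 2) F,
        IsUnit g₁.det ∧ IsUnit g₂.det ∧ g₁.det = g₂.det ∧
        X = g₁ * !![1,0;0,0] * g₂⁻¹ ∧ Y = g₁ * !![0,0;0,1] * g₂⁻¹ := by
  constructor
  · refine ⟨?_, ?_, ?_⟩ <;> norm_num [Matrix.det_fin_two, Matrix.add_apply]
  · intro X Y hX hY hXY
    set g := X + Y with hg
    have hgu : IsUnit g.det := by rw [hXY]; exact isUnit_one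
    have hginv : g * g⁻¹ = 1 := Matrix.mul_nonsing_inv g hgu
    set P := X * g⁻¹ with hPdef
    have hPone : (1 - P) = Y * g⁻¹ := by
      rw [hPdef, ← hginv, hg]
      rw [Matrix.add_mul]; abel
    have hPdet : P.det = 0 := by rw [hPdef, Matrix.det_mul, hX, zero_mul]
    have h1Pdet : (1 - P).det = 0 := by
      rw [hPone, Matrix.det_mul, hY, zero_mul]
    obtain ⟨h, hhu, hconj1, hconj2⟩ := key_conj F P hPdet h1Pdet
    refine ⟨h, g⁻¹ * h, hhu, ?_, ?_, ?_, ?_⟩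
    · rw [Matrix.det_mul, Matrix.det_nonsing_inv, hXY]
      simpa using hhu
    · rw [Matrix.det_mul, Matrix.det_nonsing_inv, hXY]; simp
    · have hinv : (g⁻¹ * h)⁻¹ = h⁻¹ * g := by
        rw [Matrix.mul_inv_rev, Matrix.nonsing_inv_nonsing_inv g hgu]
      rw [hinv, ← Matrix.mul_assoc, ← hconj1, Matrix.mul_assoc P h h⁻¹,
        Matrix.mul_nonsing_inv h hhu, Matrix.mul_one, hPdef,
        Matrix.mul_assoc, Matrix.nonsing_inv_mul g hgu, Matrix.mul_one]
    · have hinv : (g⁻¹ * h)⁻¹ = h⁻¹ * g := by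
        rw [Matrix.mul_inv_rev, Matrix.nonsing_inv_nonsing_inv g hgu]
      rw [hinv, ← Matrix.mul_assoc, ← hconj2, hPone, Matrix.mul_assoc _ h h⁻¹,
        Matrix.mul_nonsing_inv h hhu, Matrix.mul_one,
        Matrix.mul_assoc, Matrix.nonsing_inv_mul g hgu, Matrix.mul_one]
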